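/- The shooting map u₀ ↦ u(T) for the forward system is Lipschitz: if (X,u) and (X̃,ũ) solve the forward system X' = -δX + (1/β)(u-α)⁺, u' = (r+δ)u - (P(X)-c)h from the same X₀ with initial costates u₀ and ũ₀, and P is L-Lipschitz and nonincreasing, then |u(T) - ũ(T)| ≤ |u₀ - ũ₀| · exp((r + δ + hLM/(2β))T) for a constant M depending only on δ, r, T. -/

import Mathlib

open Set Real

def IsForwardSol (δ β r h α c : ℝ) (P : ℝ → ℝ) (T : ℝ) (X u : ℝ → ℝ) : Prop :=
  ∀ t ∈ Set.Icc (0 : ℝ) T,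
    HasDerivAt X (-δ * X t + (1 / β) * max (u t - α) 0) t ∧
    HasDerivAt u ((r + δ) * u t - (P (X t) - c) * h) t

lemma l1_norm_pair (a b : ℝ) :
    ‖(WithLp.prodContinuousLinearEquiv 1 ℝ ℝ ℝ).symm (a, b)‖ = |a| + |b| := by
  rw [WithLp.prod_norm_eq_add (by norm_num)]
  simp [Real.norm_eq_abs]

/-- The shooting map `u₀ ↦ u(T)` is Lipschitz, with constant
`exp((r + δ + hLM/(2β))T)` for some `M` depending only on `δ, r, T`. -/
theorem stmt_4 (δ r T : ℝ) (hδ : 0 < δ) (hr : 0 < r) (hT : 0 < T) :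
    ∃ M : ℝ, ∀ (β h α c L : ℝ), 0 < β → 0 < h → 0 < α → 0 ≤ L →
      ∀ (P : ℝ → ℝ), LipschitzWith (Real.toNNReal L) P → Antitone P →
      ∀ (X u X' u' : ℝ → ℝ),
        IsForwardSol δ β r h α c P T X u → IsForwardSol δ β r h α c P T X' u' →
        X 0 = X' 0 →
        |u T - u' T| ≤ |u 0 - u' 0| * Real.exp ((r + δ + h * L * M / (2 * β)) * T) := by
  refine ⟨2 / r, ?_⟩
  intro β h α c L hβ hh hα hL P hP _hPanti X u X' u' hXu hXu' hX0
  set γ : ℝ := h * L / r with hγdef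
  have hγ : 0 ≤ γ := by positivity
  set K : ℝ := r + δ + h * L / (r * β) with hKdef
  set e := (WithLp.prodContinuousLinearEquiv 1 ℝ ℝ ℝ).symm with he
  set F : ℝ → WithLp 1 (ℝ × ℝ) :=
    fun t => e (γ * (X t - X' t), u t - u' t) with hF
  set F' : ℝ → WithLp 1 (ℝ × ℝ) := fun t =>
    e (γ * ((-δ * X t + (1 / β) * max (u t - α) 0)
          - (-δ * X' t + (1 / β) * max (u' t - α) 0)),
        ((r + δ) * u t - (P (X t) - c) * h)
          - ((r + δ) * u' t - (P (X' t) - c) * h)) with hF'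
  have hderiv : ∀ t ∈ Set.Icc (0 : ℝ) T, HasDerivAt F (F' t) t := by
    intro t ht
    have h1 := ((hXu t ht).1.sub (hXu' t ht).1).const_mul γ
    have h2 := (hXu t ht).2.sub (hXu' t ht).2
    have hp : HasDerivAt (fun s => (γ * (X s - X' s), u s - u' s))
        ((γ * ((-δ * X t + (1 / β) * max (u t - α) 0)
          - (-δ * X' t + (1 / β) * max (u' t - α) 0)),
        ((r + δ) * u t - (P (X t) - c) * h)
          - ((r + δ) * u' t - (P (X' t) - c) * h))) t := h1.prodMk h2
    exact ((WithLp.prodContinuousLinearEquiv 1 ℝ ℝ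
      ℝ).symm.toContinuousLinearMap.hasFDerivAt.comp_hasDerivAt t hp)
  have hnormF : ∀ t, ‖F t‖ = |γ * (X t - X' t)| + |u t - u' t| := fun t => l1_norm_pair _ _
  have hnormF' : ∀ t, ‖F' t‖ =
      |γ * ((-δ * X t + (1 / β) * max (u t - α) 0)
          - (-δ * X' t + (1 / β) * max (u' t - α) 0))|
      + |((r + δ) * u t - (P (X t) - c) * h) - ((r + δ) * u' t - (P (X' t) - c) * h)| :=
    fun t => l1_norm_pair _ _
  have hbound : ∀ t ∈ Set.Ico (0 : ℝ) T, ‖F' t‖ ≤ K * ‖F t‖ + 0 := by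
    intro t ht
    rw [hnormF', hnormF, add_zero]
    have hE := abs_nonneg (X t - X' t)
    have hD := abs_nonneg (u t - u' t)
    have hmax : |max (u t - α) 0 - max (u' t - α) 0| ≤ |u t - u' t| := by
      have := abs_max_sub_max_le_abs (u t - α) (u' t - α) 0
      simpa using this
    have hPlip : |P (X t) - P (X' t)| ≤ L * |X t - X' t| := by
      have := hP.dist_le_mul (X t) (X' t)
      rw [Real.dist_eq, Real.dist_eq] at this
      simpa [Real.coe_toNNReal L hL] using this
    have h1 : |γ * ((-δ * X t + (1 / β) * max (u t - α) 0)
          - (-δ * X' t + (1 / β) * max (u' t - α) 0))|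
        ≤ γ * (δ * |X t - X' t| + (1 / β) * |u t - u' t|) := by
      rw [abs_mul, abs_of_nonneg hγ]
      gcongr
      have : (-δ * X t + (1 / β) * max (u t - α) 0)
          - (-δ * X' t + (1 / β) * max (u' t - α) 0)
          = -δ * (X t - X' t) + (1/β) * (max (u t - α) 0 - max (u' t - α) 0) := by ring
      rw [this]
      calc |(-δ) * (X t - X' t) + 1/β * (max (u t - α) 0 - max (u' t - α) 0)|
          ≤ |(-δ) * (X t - X' t)| + |1/β * (max (u t - α) 0 - max (u' t - α) 0)| :=
            abs_add_le _ _
        _ ≤ δ * |X t - X' t| + 1/β * |u t - u' t| := by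
            rw [abs_mul, abs_mul, abs_neg, abs_of_nonneg hδ.le,
              abs_of_nonneg (by positivity : (0:ℝ) ≤ 1/β)]
            gcongr
    have h2 : |((r + δ) * u t - (P (X t) - c) * h) - ((r + δ) * u' t - (P (X' t) - c) * h)|
        ≤ (r + δ) * |u t - u' t| + h * L * |X t - X' t| := by
      have : ((r + δ) * u t - (P (X t) - c) * h) - ((r + δ) * u' t - (P (X' t) - c) * h)
          = (r + δ) * (u t - u' t) - h * (P (X t) - P (X' t)) := by ring
      rw [this]
      calc |(r + δ) * (u t - u' t) - h * (P (X t) - P (X' t))|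
          ≤ |(r + δ) * (u t - u' t)| + |h * (P (X t) - P (X' t))| := abs_sub _ _
        _ ≤ (r + δ) * |u t - u' t| + h * (L * |X t - X' t|) := by
            rw [abs_mul, abs_mul, abs_of_nonneg (by positivity : (0:ℝ) ≤ r + δ),
              abs_of_nonneg hh.le]
            gcongr
        _ = (r + δ) * |u t - u' t| + h * L * |X t - X' t| := by ring
    have c1 : 0 ≤ K * γ - γ * δ - h * L := by
      have : K * γ - γ * δ - h * L = (h * L)^2 / (r^2 * β) := by
        rw [hKdef, hγdef]; field_simp; ring
      rw [this]; positivity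
    have c2 : 0 ≤ K - γ * (1/β) - (r + δ) := by
      have : K - γ * (1/β) - (r + δ) = 0 := by
        rw [hKdef, hγdef]; field_simp; ring
      linarith
    have key : γ * (δ * |X t - X' t| + (1 / β) * |u t - u' t|)
        + ((r + δ) * |u t - u' t| + h * L * |X t - X' t|)
        ≤ K * (γ * |X t - X' t| + |u t - u' t|) := by
      calc γ * (δ * |X t - X' t| + (1 / β) * |u t - u' t|)
            + ((r + δ) * |u t - u' t| + h * L * |X t - X' t|)
          = (γ * δ + h * L) * |X t - X' t| + (γ * (1/β) + (r + δ)) * |u t - u' t| := by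
            ring
        _ ≤ (K * γ) * |X t - X' t| + K * |u t - u' t| :=
            add_le_add (mul_le_mul_of_nonneg_right (by linarith) hE)
              (mul_le_mul_of_nonneg_right (by linarith) hD)
        _ = K * (γ * |X t - X' t| + |u t - u' t|) := by ring
    have habs : |γ * (X t - X' t)| = γ * |X t - X' t| := by
      rw [abs_mul, abs_of_nonneg hγ]
    rw [habs]
    exact le_trans (add_le_add h1 h2) key
  have hcont : ContinuousOn F (Set.Icc 0 T) := fun t ht =>
    (hderiv t ht).continuousAt.continuousWithinAt
  have hstart : ‖F 0‖ ≤ |u 0 - u' 0| := by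
    rw [hnormF 0, hX0]
    simp
  have hgron := norm_le_gronwallBound_of_norm_deriv_right_le hcont
    (fun t ht => (hderiv t (Set.mem_Icc.mpr ⟨ht.1, ht.2.le⟩)).hasDerivWithinAt)
    hstart hbound T (Set.mem_Icc.mpr ⟨hT.le, le_refl T⟩)
  rw [sub_zero, gronwallBound_ε0] at hgron
  have hfinal : |u T - u' T| ≤ ‖F T‖ := by
    rw [hnormF T]
    have := abs_nonneg (γ * (X T - X' T))
    linarith
  have hexp : K * T = (r + δ + h * L * (2 / r) / (2 * β)) * T := by
    rw [hKdef]
    have : h * L / (r * β) = h * L * (2 / r) / (2 * β) := by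
      field_simp
    rw [this]
  calc |u T - u' T| ≤ ‖F T‖ := hfinal
    _ ≤ |u 0 - u' 0| * Real.exp (K * T) := hgron
    _ = |u 0 - u' 0| * Real.exp ((r + δ + h * L * (2 / r) / (2 * β)) * T) := by rw [hexp]
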